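/- Solutions of the mean-field ODE taking values in [0,1]^{K+1} are unique: if t₀ > 0 and y, z : [0, t₀] → ℝ^{K+1} are differentiable functions with y(t), z(t) ∈ [0,1]^{K+1} for all t ∈ [0, t₀], satisfying y′(t) = b(y(t)) and z′(t) = b(z(t)) for all t ∈ [0, t₀], and y(0) = z(0), then y(t) = z(t) for every t ∈ [0, t₀]. -/

import Mathlib

open scoped BigOperators

/-- Extension of a vector in `ℝ^{K+1}` to all natural-number indices, by zero. -/
noncomputable def extCoord {K : ℕ} (y : EuclideanSpace ℝ (Fin (K + 1))) (n : ℕ) : ℝ :=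
  if h : n < K + 1 then y ⟨n, h⟩ else 0

/-- The mean-field drift `b` of the bike-sharing model:
`b(y)(k) = Λ̃·(y(k+1)·[k<K] − y(k)·[k>0])
          + (γ − Σₙ n·y(n))·(y(k−1)·[k>0] − y(k)·[k<K])`. -/
noncomputable def drift (K : ℕ) (Λ' γ : ℝ) (y : EuclideanSpace ℝ (Fin (K + 1))) :
    EuclideanSpace ℝ (Fin (K + 1)) :=
  WithLp.toLp 2 fun (k : Fin (K + 1)) =>
    Λ' * (extCoord y ((k : ℕ) + 1) * (if (k : ℕ) < K then 1 else 0)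
          - y k * (if 0 < (k : ℕ) then 1 else 0))
    + (γ - ∑ n : Fin (K + 1), (n : ℝ) * y n)
      * (extCoord y ((k : ℕ) - 1) * (if 0 < (k : ℕ) then 1 else 0)
         - y k * (if (k : ℕ) < K then 1 else 0))


lemma contDiff_extCoord (K : ℕ) (n : ℕ) :
    ContDiff ℝ 2 (fun y : EuclideanSpace ℝ (Fin (K + 1)) => extCoord y n) := by
  unfold extCoord
  by_cases h : n < K + 1
  · simpa [h] using (EuclideanSpace.proj (⟨n, h⟩ : Fin (K + 1)) :
        EuclideanSpace ℝ (Fin (K + 1)) →L[ℝ] ℝ).contDiff (n := 2)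
  · simpa [h] using contDiff_const (c := (0 : ℝ))

lemma contDiff_drift (K : ℕ) (Λ' γ : ℝ) : ContDiff ℝ 2 (drift K Λ' γ) := by
  rw [contDiff_euclidean]
  intro k
  have hsum : ContDiff ℝ 2
      (fun y : EuclideanSpace ℝ (Fin (K + 1)) => ∑ n : Fin (K + 1), (n : ℝ) * y n) :=
    ContDiff.sum fun n _ => contDiff_const.mul (EuclideanSpace.proj n : EuclideanSpace ℝ (Fin (K + 1)) →L[ℝ] ℝ).contDiff
  show ContDiff ℝ 2 fun y : EuclideanSpace ℝ (Fin (K + 1)) => drift K Λ' γ y k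
  simp only [drift]
  exact (contDiff_const.mul (((contDiff_extCoord K _).mul contDiff_const).sub
      (((EuclideanSpace.proj k : EuclideanSpace ℝ (Fin (K + 1)) →L[ℝ] ℝ).contDiff).mul contDiff_const))).add
    ((contDiff_const.sub hsum).mul (((contDiff_extCoord K _).mul contDiff_const).sub
      (((EuclideanSpace.proj k : EuclideanSpace ℝ (Fin (K + 1)) →L[ℝ] ℝ).contDiff).mul contDiff_const)))

/-- Solutions of the mean-field ODE taking values in the cube `[0,1]^{K+1}` are unique. -/
theorem drift_ode_uniqueness (K : ℕ) (hK : 1 ≤ K) (Λ' γ : ℝ) (hΛ : 0 < Λ') (hγ : 0 ≤ γ)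
    (t₀ : ℝ) (ht₀ : 0 < t₀)
    (y z : ℝ → EuclideanSpace ℝ (Fin (K + 1)))
    (hycube : ∀ t ∈ Set.Icc (0 : ℝ) t₀, ∀ k, y t k ∈ Set.Icc (0 : ℝ) 1)
    (hzcube : ∀ t ∈ Set.Icc (0 : ℝ) t₀, ∀ k, z t k ∈ Set.Icc (0 : ℝ) 1)
    (hy : ∀ t ∈ Set.Icc (0 : ℝ) t₀,
      HasDerivWithinAt y (drift K Λ' γ (y t)) (Set.Icc (0 : ℝ) t₀) t)
    (hz : ∀ t ∈ Set.Icc (0 : ℝ) t₀,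
      HasDerivWithinAt z (drift K Λ' γ (z t)) (Set.Icc (0 : ℝ) t₀) t)
    (h0 : y 0 = z 0) :
    ∀ t ∈ Set.Icc (0 : ℝ) t₀, y t = z t := by
  classical
  set s : Set (EuclideanSpace ℝ (Fin (K + 1))) := {x | ∀ k, x k ∈ Set.Icc (0 : ℝ) 1} with hs
  have hseq : s = (EuclideanSpace.equiv (Fin (K + 1)) ℝ) ⁻¹'
      (Set.univ.pi fun _ => Set.Icc (0 : ℝ) 1) := by
    ext x
    simp only [hs, Set.mem_setOf_eq, Set.mem_preimage, Set.mem_univ_pi]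
    rfl
  have hcomp : IsCompact s := by
    rw [hseq]
    exact (EuclideanSpace.equiv (Fin (K + 1)) ℝ).toHomeomorph.isCompact_preimage.mpr
      (isCompact_univ_pi fun _ => isCompact_Icc)
  have hconv : Convex ℝ s := by
    intro u hu v hv a b ha hb hab
    intro k
    have h1 := hu k
    have h2 := hv k
    have : (a • u + b • v) k = a * u k + b * v k := rfl
    rw [Set.mem_Icc] at h1 h2 ⊢
    rw [this]
    constructor
    · exact add_nonneg (mul_nonneg ha h1.1) (mul_nonneg hb h2.1)
    · calc a * u k + b * v k ≤ a * 1 + b * 1 := by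
            gcongr <;> [exact h1.2; exact h2.2]
        _ = 1 := by linarith
  have hcd := contDiff_drift K Λ' γ
  have hdiff : Differentiable ℝ (drift K Λ' γ) := hcd.differentiable two_ne_zero
  have hfc : Continuous (fderiv ℝ (drift K Λ' γ)) := hcd.continuous_fderiv two_ne_zero
  obtain ⟨C, hC⟩ := hcomp.exists_bound_of_continuousOn hfc.continuousOn
  have hlip : LipschitzOnWith C.toNNReal (drift K Λ' γ) s := by
    apply Convex.lipschitzOnWith_of_nnnorm_fderiv_le (fun x _ => hdiff x) _ hconv
    intro x hx
    have h1 := hC x hx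
    have h2 : (C : ℝ) ≤ (C.toNNReal : ℝ) := Real.le_coe_toNNReal C
    exact_mod_cast h1.trans h2
  have hycont : ContinuousOn y (Set.Icc 0 t₀) := fun t ht => (hy t ht).continuousWithinAt
  have hzcont : ContinuousOn z (Set.Icc 0 t₀) := fun t ht => (hz t ht).continuousWithinAt
  have hmem : ∀ t ∈ Set.Ico (0 : ℝ) t₀, Set.Icc (0 : ℝ) t₀ ∈ nhdsWithin t (Set.Ici t) := by
    intro t ht
    exact mem_nhdsWithin.mpr ⟨Set.Iio t₀, isOpen_Iio, ht.2,
      fun x hx => ⟨ht.1.trans hx.2, hx.1.le⟩⟩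
  have hdy : ∀ t ∈ Set.Ico (0 : ℝ) t₀,
      HasDerivWithinAt y (drift K Λ' γ (y t)) (Set.Ici t) t := fun t ht =>
    (hy t (Set.mem_Icc_of_Ico ht)).mono_of_mem_nhdsWithin (hmem t ht)
  have hdz : ∀ t ∈ Set.Ico (0 : ℝ) t₀,
      HasDerivWithinAt z (drift K Λ' γ (z t)) (Set.Ici t) t := fun t ht =>
    (hz t (Set.mem_Icc_of_Ico ht)).mono_of_mem_nhdsWithin (hmem t ht)
  exact fun t ht =>
    ODE_solution_unique_of_mem_Icc_right (v := fun _ => drift K Λ' γ) (s := fun _ => s)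
      (fun _ _ => hlip) hycont hdy
      (fun t ht k => hycube t (Set.mem_Icc_of_Ico ht) k)
      hzcont hdz (fun t ht k => hzcube t (Set.mem_Icc_of_Ico ht) k) h0 ht
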